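/- Let γ ≥ 1, r, s ≥ 0, τ ∈ [0, 1/2), and t ≥ r + s(1+τ²)^{1/(2γ)}. Then for all x, ω, y, η ∈ ℝ^d: exp((r+s)|(x,ω)|^{1/γ}) ≤ exp(r|(y,η)|^{1/γ}) · exp(s|((1−τ)x+τy, τω+(1−τ)η)|^{1/γ}) · exp(t|(ω−η, y−x)|^{1/γ}). -/

import Mathlib

open Real

/-- Euclidean norm of a pair (a,b) ∈ ℝ^{2d}. -/
noncomputable def pairNorm {d : ℕ} (a b : EuclideanSpace ℝ (Fin d)) : ℝ :=
  Real.sqrt (‖a‖ ^ 2 + ‖b‖ ^ 2)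

lemma pairNorm_eq {d : ℕ} (a b : EuclideanSpace ℝ (Fin d)) :
    pairNorm a b =
      ‖(WithLp.equiv 2 (EuclideanSpace ℝ (Fin d) × EuclideanSpace ℝ (Fin d))).symm (a, b)‖ := by
  rw [WithLp.prod_norm_eq_of_L2]
  rfl

lemma pairNorm_nonneg {d : ℕ} (a b : EuclideanSpace ℝ (Fin d)) : 0 ≤ pairNorm a b :=
  Real.sqrt_nonneg _

lemma pairNorm_add_le {d : ℕ} (a b c e : EuclideanSpace ℝ (Fin d)) :
    pairNorm (a + c) (b + e) ≤ pairNorm a b + pairNorm c e := by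
  rw [pairNorm_eq, pairNorm_eq, pairNorm_eq]
  exact norm_add_le ((WithLp.equiv 2 _).symm (a, b)) ((WithLp.equiv 2 _).symm (c, e))

lemma real_rpow_add_le {a b p : ℝ} (ha : 0 ≤ a) (hb : 0 ≤ b) (hp : 0 ≤ p) (hp1 : p ≤ 1) :
    (a + b) ^ p ≤ a ^ p + b ^ p := by
  have h := NNReal.rpow_add_le_add_rpow ⟨a, ha⟩ ⟨b, hb⟩ hp hp1
  have h2 := NNReal.coe_le_coe.2 h
  exact h2

set_option maxHeartbeats 1000000

/-- For γ ≥ 1, r, s ≥ 0, τ ∈ [0,1/2) and t ≥ r + s(1+τ²)^{1/(2γ)}: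
    exp((r+s)|(x,ω)|^{1/γ}) ≤ exp(r|(y,η)|^{1/γ}) ·
    exp(s|((1−τ)x+τy, τω+(1−τ)η)|^{1/γ}) · exp(t|(ω−η, y−x)|^{1/γ}). -/
theorem weight_estimate_small_tau (d : ℕ) (γ r s τ t : ℝ)
    (hγ : 1 ≤ γ) (hr : 0 ≤ r) (hs : 0 ≤ s)
    (hτ0 : 0 ≤ τ) (hτ1 : τ < 1 / 2)
    (ht : r + s * (1 + τ ^ 2) ^ (1 / (2 * γ)) ≤ t)
    (x ω y η : EuclideanSpace ℝ (Fin d)) :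
    Real.exp ((r + s) * pairNorm x ω ^ (1 / γ))
      ≤ Real.exp (r * pairNorm y η ^ (1 / γ))
        * Real.exp (s * pairNorm ((1 - τ) • x + τ • y) (τ • ω + (1 - τ) • η) ^ (1 / γ))
        * Real.exp (t * pairNorm (ω - η) (y - x) ^ (1 / γ)) := by
  set p : ℝ := 1 / γ with hp
  have hγ0 : 0 < γ := lt_of_lt_of_le one_pos hγ
  have hp0 : 0 ≤ p := by positivity
  have hp1 : p ≤ 1 := by
    rw [hp, div_le_one hγ0]; exact hγ
  set A := pairNorm x ω with hA
  set B := pairNorm y η with hB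
  set C := pairNorm ((1 - τ) • x + τ • y) (τ • ω + (1 - τ) • η) with hC
  set D := pairNorm (ω - η) (y - x) with hD
  have hAn : 0 ≤ A := pairNorm_nonneg _ _
  have hBn : 0 ≤ B := pairNorm_nonneg _ _
  have hCn : 0 ≤ C := pairNorm_nonneg _ _
  have hDn : 0 ≤ D := pairNorm_nonneg _ _
  -- D is also the pairNorm of (x - y, ω - η)
  have hDeq : D = pairNorm (x - y) (ω - η) := by
    rw [hD]
    unfold pairNorm
    rw [norm_sub_rev x y, norm_sub_rev ω η]
    ring_nf
  -- A ≤ B + D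
  have hA1 : A ≤ B + D := by
    rw [hDeq]
    have h := pairNorm_add_le y η (x - y) (ω - η)
    simpa using h
  -- A ≤ C + D
  have hA2 : A ≤ C + D := by
    have h := pairNorm_add_le ((1 - τ) • x + τ • y) (τ • ω + (1 - τ) • η)
      (τ • (x - y)) ((1 - τ) • (ω - η))
    have he1 : (1 - τ) • x + τ • y + τ • (x - y) = x := by
      rw [smul_sub]; module
    have he2 : τ • ω + (1 - τ) • η + (1 - τ) • (ω - η) = ω := by
      rw [smul_sub]; module
    rw [he1, he2] at h
    refine h.trans (add_le_add_right ?_ C)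
    -- pairNorm (τ•(x-y)) ((1-τ)•(ω-η)) ≤ D
    rw [hDeq]
    unfold pairNorm
    apply Real.sqrt_le_sqrt
    rw [norm_smul, norm_smul]
    have hτ1' : τ ≤ 1 := le_of_lt (lt_of_lt_of_le hτ1 (by norm_num))
    have h1 : ‖τ‖ = τ := abs_of_nonneg hτ0
    have h2 : ‖(1 - τ)‖ = 1 - τ := abs_of_nonneg (by linarith)
    rw [h1, h2]
    have hx' : 0 ≤ ‖x - y‖ := norm_nonneg _
    have hω' : 0 ≤ ‖ω - η‖ := norm_nonneg _
    have hq1 : τ ^ 2 ≤ 1 := by nlinarith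
    have hq2 : (1 - τ) ^ 2 ≤ 1 := by nlinarith
    nlinarith [mul_le_mul_of_nonneg_right hq1 (sq_nonneg ‖x - y‖),
      mul_le_mul_of_nonneg_right hq2 (sq_nonneg ‖ω - η‖)]
  -- reduce to exponent inequality
  rw [← Real.exp_add, ← Real.exp_add, Real.exp_le_exp]
  have hrs_t : r + s ≤ t := by
    have h1 : (1:ℝ) ≤ (1 + τ ^ 2) ^ (1 / (2 * γ)) :=
      Real.one_le_rpow (by nlinarith) (by positivity)
    have h2 : s * 1 ≤ s * (1 + τ ^ 2) ^ (1 / (2 * γ)) := mul_le_mul_of_nonneg_left h1 hs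
    rw [mul_one] at h2
    linarith only [ht, h2]
  have hAp1 : A ^ p ≤ B ^ p + D ^ p :=
    (Real.rpow_le_rpow hAn hA1 hp0).trans (real_rpow_add_le hBn hDn hp0 hp1)
  have hAp2 : A ^ p ≤ C ^ p + D ^ p :=
    (Real.rpow_le_rpow hAn hA2 hp0).trans (real_rpow_add_le hCn hDn hp0 hp1)
  have hDp : 0 ≤ D ^ p := Real.rpow_nonneg hDn p
  have h1 : r * A ^ p ≤ r * B ^ p + r * D ^ p := by
    rw [← mul_add]; exact mul_le_mul_of_nonneg_left hAp1 hr
  have h2 : s * A ^ p ≤ s * C ^ p + s * D ^ p := by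
    rw [← mul_add]; exact mul_le_mul_of_nonneg_left hAp2 hs
  have h3 : (r + s) * D ^ p ≤ t * D ^ p := mul_le_mul_of_nonneg_right hrs_t hDp
  linarith only [h1, h2, h3]
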